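/- arXiv:1812.07391 — 3 statements merged into one kernel-verified Lean document; each statement's English description precedes it below -/
import Mathlib

section
/- Let 𝕂 be a Krein space with fundamental symmetry J and let {(W_i, v_i) : i ∈ I} be a J-fusion frame for 𝕂 with synthesis operator T_{W,v}. Define S₊(f) = Σ_{i∈I₊} v_i² π_{W_i}(Jf) and S₋(f) = Σ_{i∈I₋} v_i² π_{W_i}(Jf). Then S₊ and S₋ are J-positive operators (indeed [S₊f, f] = Σ_{i∈I₊} v_i² ‖π_{W_i}Jf‖² ≥ 0 and similarly for S₋), S₊ = T₊T₊^#, S₋ = −T₋T₋^#, and the J-fusion frame operator S_{W,v} = T_{W,v}T_{W,v}^# satisfies S_{W,v} = S₊ − S₋. -/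
noncomputable section

open scoped InnerProductSpace ENNReal

attribute [local instance] Classical.propDecidable

namespace JFF

instance : Fact ((1 : ℝ≥0∞) ≤ 2) := ⟨by norm_num⟩

variable {𝕂 : Type*} [NormedAddCommGroup 𝕂] [InnerProductSpace ℂ 𝕂] [CompleteSpace 𝕂]
variable {ι : Type*}

/-- The indefinite inner product `[x, y]` induced by the fundamental symmetry `J`;
with Mathlib's convention (inner products conjugate-linear in the *first* variable),
the paper's `[x, y] = ⟨Jx, y⟩`, which is linear in `x`, is `⟪J y, x⟫_ℂ`. -/
def ip (J : 𝕂 →L[ℂ] 𝕂) (x y : 𝕂) : ℂ := @inner ℂ _ _ (J y) x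

/-- `J` is a fundamental symmetry: a bounded selfadjoint operator with `J ∘ J = 1`. -/
def IsFundSym (J : 𝕂 →L[ℂ] 𝕂) : Prop := IsSelfAdjoint J ∧ J ∘L J = 1

/-- `W` is a `J`-nonnegative subspace. -/
def JNonneg (J : 𝕂 →L[ℂ] 𝕂) (W : Submodule ℂ 𝕂) : Prop :=
  ∀ f ∈ W, 0 ≤ (ip J f f).re

/-- `W` is a `J`-nonpositive subspace. -/
def JNonpos (J : 𝕂 →L[ℂ] 𝕂) (W : Submodule ℂ 𝕂) : Prop :=
  ∀ f ∈ W, (ip J f f).re ≤ 0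

/-- `W` is a `J`-negative subspace. -/
def JNeg (J : 𝕂 →L[ℂ] 𝕂) (W : Submodule ℂ 𝕂) : Prop :=
  ∀ f ∈ W, f ≠ 0 → (ip J f f).re < 0

/-- `W` is uniformly `J`-positive. -/
def UnifJPos (J : 𝕂 →L[ℂ] 𝕂) (W : Submodule ℂ 𝕂) : Prop :=
  ∃ α : ℝ, 0 < α ∧ ∀ f ∈ W, α * ‖f‖ ^ 2 ≤ (ip J f f).re

/-- `W` is uniformly `J`-negative. -/
def UnifJNeg (J : 𝕂 →L[ℂ] 𝕂) (W : Submodule ℂ 𝕂) : Prop :=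
  ∃ α : ℝ, 0 < α ∧ ∀ f ∈ W, (ip J f f).re ≤ -(α * ‖f‖ ^ 2)

/-- `W` is maximal uniformly `J`-positive. -/
def MaxUnifJPos (J : 𝕂 →L[ℂ] 𝕂) (W : Submodule ℂ 𝕂) : Prop :=
  UnifJPos J W ∧ ∀ W' : Submodule ℂ 𝕂, UnifJPos J W' → W ≤ W' → W' = W

/-- `W` is maximal uniformly `J`-negative. -/
def MaxUnifJNeg (J : 𝕂 →L[ℂ] 𝕂) (W : Submodule ℂ 𝕂) : Prop :=
  UnifJNeg J W ∧ ∀ W' : Submodule ℂ 𝕂, UnifJNeg J W' → W ≤ W' → W' = W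

/-- `W` is a maximal `J`-nonnegative subspace. -/
def MaxJNonneg (J : 𝕂 →L[ℂ] 𝕂) (W : Submodule ℂ 𝕂) : Prop :=
  JNonneg J W ∧ ∀ W' : Submodule ℂ 𝕂, JNonneg J W' → W ≤ W' → W' = W

/-- `W` is a maximal `J`-nonpositive subspace. -/
def MaxJNonpos (J : 𝕂 →L[ℂ] 𝕂) (W : Submodule ℂ 𝕂) : Prop :=
  JNonpos J W ∧ ∀ W' : Submodule ℂ 𝕂, JNonpos J W' → W ≤ W' → W' = W

/-- The `J`-orthogonal companion `M^{[⊥]} = {f | [f, m] = 0 ∀ m ∈ M}`. -/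
def JOrth (J : 𝕂 →L[ℂ] 𝕂) (M : Submodule ℂ 𝕂) : Submodule ℂ 𝕂 where
  carrier := {f | ∀ m ∈ M, ip J f m = 0}
  add_mem' := by
    intro a b ha hb m hm
    simp only [ip, inner_add_right] at *
    rw [ha m hm, hb m hm, add_zero]
  zero_mem' := by
    intro m hm
    simp [ip]
  smul_mem' := by
    intro c a ha m hm
    simp only [ip, inner_smul_right] at *
    rw [ha m hm, mul_zero]

/-- A closed subspace is regular (projectively complete) if `𝕂 = M ⊕ M^{[⊥]}`. -/
def Regular (J : 𝕂 →L[ℂ] 𝕂) (M : Submodule ℂ 𝕂) : Prop :=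
  IsClosed (M : Set 𝕂) ∧ IsCompl M (JOrth J M)

/-- The orthogonal projection `π_M` onto `M` as an endomorphism of `𝕂`
(junk value `0` if `M` is not closed). -/
def pr (M : Submodule ℂ 𝕂) : 𝕂 →L[ℂ] 𝕂 :=
  if h : IsClosed (M : Set 𝕂) then
    letI : CompleteSpace M := h.completeSpace_coe
    M.subtypeL ∘L M.orthogonalProjectionOnto
  else 0

/-- The Gramian operator `G_M = π_M ∘ J|_M : M → M`
(junk value `0` if `M` is not closed). -/
def gram (J : 𝕂 →L[ℂ] 𝕂) (M : Submodule ℂ 𝕂) : M →L[ℂ] M :=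
  if h : IsClosed (M : Set 𝕂) then
    letI : CompleteSpace M := h.completeSpace_coe
    M.orthogonalProjectionOnto ∘L (J ∘L M.subtypeL)
  else 0

/-- The reduced minimum modulus `γ(T) = inf {‖Tx‖ : x ∈ N(T)ᗮ, ‖x‖ = 1}`. -/
def rmm {E F : Type*} [NormedAddCommGroup E] [InnerProductSpace ℂ E]
    [NormedAddCommGroup F] [InnerProductSpace ℂ F] (T : E →L[ℂ] F) : ℝ :=
  sInf ((fun x => ‖T x‖) '' {x | x ∈ (LinearMap.ker (T : E →ₗ[ℂ] F))ᗮ ∧ ‖x‖ = 1})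

/-- `M_S`: the closure of `Σ_{i ∈ S} W i`. -/
def Mspace (W : ι → Submodule ℂ 𝕂) (S : Set ι) : Submodule ℂ 𝕂 :=
  (⨆ i ∈ S, W i).topologicalClosure

/-- The closed span of `{f i : i ∈ S}`. -/
def Mspan (f : ι → 𝕂) (S : Set ι) : Submodule ℂ 𝕂 :=
  (Submodule.span ℂ (f '' S)).topologicalClosure

/-- The subspace of the ℓ²-direct sum consisting of families supported on `S`. -/
def supp (W : ι → Submodule ℂ 𝕂) (S : Set ι) :
    Submodule ℂ (lp (fun i => W i) 2) where
  carrier := {x | ∀ i ∉ S, x i = 0}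
  add_mem' := by
    intro a b ha hb i hi
    have h : (a + b : lp (fun i => W i) 2) i = a i + b i := by
      rw [lp.coeFn_add]; rfl
    rw [h, ha i hi, hb i hi, add_zero]
  zero_mem' := by
    intro i hi
    have h : (0 : lp (fun i => W i) 2) i = 0 := by
      rw [lp.coeFn_zero]; rfl
    rw [h]
  smul_mem' := by
    intro c a ha i hi
    have h : (c • a : lp (fun i => W i) 2) i = c • a i := by
      rw [lp.coeFn_smul]; rfl
    rw [h, ha i hi, smul_zero]

/-- `T` is the synthesis operator of the weighted family of subspaces `(W, v)`:
`T {f_i} = Σ_i v_i f_i` (an unconditionally convergent sum). -/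
def IsSynth (W : ι → Submodule ℂ 𝕂) (v : ι → ℝ)
    (T : lp (fun i => W i) 2 →L[ℂ] 𝕂) : Prop :=
  ∀ x : lp (fun i => W i) 2, HasSum (fun i => (v i : ℂ) • (x i : 𝕂)) (T x)

/-- The range of `T ∘ P_S` where `P_S` is the orthogonal projection onto the
families supported on `S`, i.e. the image under `T` of the families supported on `S`. -/
def rng {W : ι → Submodule ℂ 𝕂} (T : lp (fun i => W i) 2 →L[ℂ] 𝕂)
    (S : Set ι) : Submodule ℂ 𝕂 :=
  (supp W S).map (T : lp (fun i => W i) 2 →ₗ[ℂ] 𝕂)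

/-- `(W, v)` (with the partition `Ipos`, `Ineg` of the index set and synthesis
operator `T`) is a `J`-fusion frame for `𝕂`. -/
structure IsJFusionFrame (J : 𝕂 →L[ℂ] 𝕂) (W : ι → Submodule ℂ 𝕂) (v : ι → ℝ)
    (Ipos Ineg : Set ι) (T : lp (fun i => W i) 2 →L[ℂ] 𝕂) : Prop where
  partition : ∀ i : ι, (i ∈ Ipos ∧ i ∉ Ineg) ∨ (i ∈ Ineg ∧ i ∉ Ipos)
  pos_nonneg : ∀ i ∈ Ipos, JNonneg J (W i)
  neg_neg : ∀ i ∈ Ineg, JNeg J (W i)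
  weights : ∀ i, 0 < v i
  synth : IsSynth W v T
  max_pos : MaxUnifJPos J (rng T Ipos)
  max_neg : MaxUnifJNeg J (rng T Ineg)

/-- `Bm ≤ Am < 0 < Ap ≤ Bp` are `J`-fusion frame bounds for `(W, v)`:
`A_± [f,f] ≤ Σ_{i ∈ I_±} v_i² |[π_{W_i} J f, f]| ≤ B_± [f,f]` for `f ∈ M_±`. -/
def JFusionBounds (J : 𝕂 →L[ℂ] 𝕂) (W : ι → Submodule ℂ 𝕂) (v : ι → ℝ)
    (Ipos Ineg : Set ι) (Bm Am Ap Bp : ℝ) : Prop :=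
  Bm ≤ Am ∧ Am < 0 ∧ 0 < Ap ∧ Ap ≤ Bp ∧
  (∀ f ∈ Mspace W Ipos,
    Summable (fun i : Ipos => v (i : ι) ^ 2 * ‖ip J (pr (W (i : ι)) (J f)) f‖) ∧
    Ap * (ip J f f).re ≤ ∑' i : Ipos, v (i : ι) ^ 2 * ‖ip J (pr (W (i : ι)) (J f)) f‖ ∧
    ∑' i : Ipos, v (i : ι) ^ 2 * ‖ip J (pr (W (i : ι)) (J f)) f‖ ≤ Bp * (ip J f f).re) ∧
  (∀ f ∈ Mspace W Ineg,
    Summable (fun i : Ineg => v (i : ι) ^ 2 * ‖ip J (pr (W (i : ι)) (J f)) f‖) ∧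
    Am * (ip J f f).re ≤ ∑' i : Ineg, v (i : ι) ^ 2 * ‖ip J (pr (W (i : ι)) (J f)) f‖ ∧
    ∑' i : Ineg, v (i : ι) ^ 2 * ‖ip J (pr (W (i : ι)) (J f)) f‖ ≤ Bm * (ip J f f).re)

/-- `(Bm, Am, Ap, Bp)` are the *optimal* `J`-fusion frame bounds. -/
def OptJFusionBounds (J : 𝕂 →L[ℂ] 𝕂) (W : ι → Submodule ℂ 𝕂) (v : ι → ℝ)
    (Ipos Ineg : Set ι) (Bm Am Ap Bp : ℝ) : Prop :=
  JFusionBounds J W v Ipos Ineg Bm Am Ap Bp ∧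
  ∀ Bm' Am' Ap' Bp' : ℝ, JFusionBounds J W v Ipos Ineg Bm' Am' Ap' Bp' →
    Bm' ≤ Bm ∧ Am ≤ Am' ∧ Ap' ≤ Ap ∧ Bp ≤ Bp'

/-- `{f i}` (with the partition `Ipos`, `Ineg` of the index set) is a `J`-frame for `𝕂`. -/
structure IsJFrame (J : 𝕂 →L[ℂ] 𝕂) (f : ι → 𝕂) (Ipos Ineg : Set ι) : Prop where
  partition : ∀ i : ι, (i ∈ Ipos ∧ i ∉ Ineg) ∨ (i ∈ Ineg ∧ i ∉ Ipos)
  nonneg : ∀ i ∈ Ipos, 0 ≤ (ip J (f i) (f i)).re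
  neg : ∀ i ∈ Ineg, (ip J (f i) (f i)).re < 0
  frame : ∃ C D : ℝ, 0 < C ∧ C ≤ D ∧ ∀ g : 𝕂,
    Summable (fun i => ‖@inner ℂ _ _ g (f i)‖ ^ 2) ∧
    C * ‖g‖ ^ 2 ≤ ∑' i, ‖@inner ℂ _ _ g (f i)‖ ^ 2 ∧
    ∑' i, ‖@inner ℂ _ _ g (f i)‖ ^ 2 ≤ D * ‖g‖ ^ 2
  max_pos : MaxUnifJPos J (Mspan f Ipos)
  max_neg : MaxUnifJNeg J (Mspan f Ineg)

/-- `Bm ≤ Am < 0 < Ap ≤ Bp` are `J`-frame bounds for `{f i}`: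
`A_± [g,g] ≤ Σ_{i ∈ I_±} |[g, f i]|² ≤ B_± [g,g]` for `g ∈ M_±`. -/
def JFrameBounds (J : 𝕂 →L[ℂ] 𝕂) (f : ι → 𝕂) (Ipos Ineg : Set ι)
    (Bm Am Ap Bp : ℝ) : Prop :=
  Bm ≤ Am ∧ Am < 0 ∧ 0 < Ap ∧ Ap ≤ Bp ∧
  (∀ g ∈ Mspan f Ipos,
    Summable (fun i : Ipos => ‖ip J g (f (i : ι))‖ ^ 2) ∧
    Ap * (ip J g g).re ≤ ∑' i : Ipos, ‖ip J g (f (i : ι))‖ ^ 2 ∧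
    ∑' i : Ipos, ‖ip J g (f (i : ι))‖ ^ 2 ≤ Bp * (ip J g g).re) ∧
  (∀ g ∈ Mspan f Ineg,
    Summable (fun i : Ineg => ‖ip J g (f (i : ι))‖ ^ 2) ∧
    Am * (ip J g g).re ≤ ∑' i : Ineg, ‖ip J g (f (i : ι))‖ ^ 2 ∧
    ∑' i : Ineg, ‖ip J g (f (i : ι))‖ ^ 2 ≤ Bm * (ip J g g).re)

/-- `(Bm, Am, Ap, Bp)` are the *optimal* `J`-frame bounds. -/
def OptJFrameBounds (J : 𝕂 →L[ℂ] 𝕂) (f : ι → 𝕂) (Ipos Ineg : Set ι)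
    (Bm Am Ap Bp : ℝ) : Prop :=
  JFrameBounds J f Ipos Ineg Bm Am Ap Bp ∧
  ∀ Bm' Am' Ap' Bp' : ℝ, JFrameBounds J f Ipos Ineg Bm' Am' Ap' Bp' →
    Bm' ≤ Bm ∧ Am ≤ Am' ∧ Ap' ≤ Ap ∧ Bp ≤ Bp'


lemma pr_apply' (M : Submodule ℂ 𝕂) (hM : IsClosed (M : Set 𝕂)) [CompleteSpace M] (f : 𝕂) :
    pr M f = (M.orthogonalProjectionOnto f : 𝕂) := by
  unfold pr; rw [dif_pos hM]; rfl

lemma inner_pr_self (M : Submodule ℂ 𝕂) (hM : IsClosed (M : Set 𝕂)) [CompleteSpace M] (g : 𝕂) :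
    @inner ℂ _ _ g (pr M g) = ((‖pr M g‖ ^ 2 : ℝ) : ℂ) := by
  have h0 : @inner ℂ _ _ (g - (M.orthogonalProjectionOnto g : 𝕂)) (M.orthogonalProjectionOnto g : 𝕂) = 0 :=
    M.starProjection_inner_eq_zero g _ (M.orthogonalProjectionOnto g).2
  rw [inner_sub_left, sub_eq_zero] at h0
  rw [pr_apply' M hM, h0, inner_self_eq_norm_sq_to_K]
  norm_cast

lemma adjoint_comp (W : ι → Submodule ℂ 𝕂) [∀ i, CompleteSpace (W i)]
    (c : ι → ℂ) (T' : lp (fun i => W i) 2 →L[ℂ] 𝕂)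
    (h : ∀ x : lp (fun i => W i) 2, HasSum (fun i => c i • (x i : 𝕂)) (T' x))
    (f : 𝕂) (i : ι) :
    (ContinuousLinearMap.adjoint T' f) i
      = (starRingEnd ℂ (c i)) • (W i).orthogonalProjectionOnto f := by
  apply ext_inner_right ℂ
  intro w
  have h1 : T' (lp.single 2 i w) = c i • (w : 𝕂) := by
    refine (h (lp.single 2 i w)).unique ?_
    have key : (fun j => c j • ((lp.single 2 i w : lp (fun k => W k) 2) j : 𝕂))
        = fun j => if j = i then c i • (w : 𝕂) else 0 := by
      funext j
      rcases eq_or_ne j i with rfl | hj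
      · simp [lp.single_apply_self]
      · simp [lp.single_apply_ne _ _ _ hj, hj]
    rw [key]
    exact hasSum_ite_eq i (c i • (w : 𝕂))
  have l1 : @inner ℂ _ _ ((ContinuousLinearMap.adjoint T' f) i) w
      = @inner ℂ _ _ f (T' (lp.single 2 i w)) := by
    rw [← lp.inner_single_right, ContinuousLinearMap.adjoint_inner_left]
  have l2 : @inner ℂ _ _ (((W i).orthogonalProjectionOnto f : 𝕂)) (w : 𝕂)
      = @inner ℂ _ _ f (w : 𝕂) := by
    have : @inner ℂ _ _ (f - ((W i).orthogonalProjectionOnto f : 𝕂)) (w : 𝕂) = 0 :=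
      (W i).starProjection_inner_eq_zero f (w : 𝕂) w.2
    rw [inner_sub_left, sub_eq_zero] at this
    exact this.symm
  rw [l1, h1, inner_smul_right, Submodule.coe_inner, Submodule.coe_smul, inner_smul_left,
    Complex.conj_conj, l2]

set_option maxHeartbeats 2000000 in
/-- For a `J`-fusion frame with synthesis operator `T`, the operators
`S₊ f = Σ_{i∈I₊} v_i² π_{W_i}(Jf)` and `S₋ f = Σ_{i∈I₋} v_i² π_{W_i}(Jf)` satisfy
`[S₊ f, f] = Σ_{i∈I₊} v_i² ‖π_{W_i}Jf‖² ≥ 0` (and similarly for `S₋`), so both are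
`J`-positive; moreover `S₊ = T₊ T₊^#`, `S₋ = - T₋ T₋^#` (`T_± = T ∘ P_±`,
`T_±^# = J₂ T_±^* J`), and the `J`-fusion frame operator
`S f = Σ_i σ_i v_i² π_{W_i}(Jf) = T T^#` satisfies `S = S₊ - S₋`. -/
theorem stmt2 {𝕂 : Type*} [NormedAddCommGroup 𝕂] [InnerProductSpace ℂ 𝕂] [CompleteSpace 𝕂]
    {ι : Type*} (J : 𝕂 →L[ℂ] 𝕂) (hJ : IsFundSym J)
    (W : ι → Submodule ℂ 𝕂) (hWc : ∀ i, IsClosed ((W i : Set 𝕂))) [∀ i, CompleteSpace (W i)]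
    (v : ι → ℝ) (Ipos Ineg : Set ι)
    (T : lp (fun i => W i) 2 →L[ℂ] 𝕂)
    (hF : IsJFusionFrame J W v Ipos Ineg T)
    -- the orthogonal projections `P₊`, `P₋` of the ℓ²-direct sum onto the families
    -- supported on `I₊` resp. `I₋`:
    (Ppos Pneg : lp (fun i => W i) 2 →L[ℂ] lp (fun i => W i) 2)
    (hPpos : ∀ x (i : ι), (Ppos x) i = if i ∈ Ipos then x i else 0)
    (hPneg : ∀ x (i : ι), (Pneg x) i = if i ∈ Ineg then x i else 0)
    -- the fundamental symmetry `J₂ {f_i} = {σ_i f_i}` of the ℓ²-direct sum: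
    (J2 : lp (fun i => W i) 2 →L[ℂ] lp (fun i => W i) 2)
    (hJ2 : ∀ x (i : ι), (J2 x) i = (if i ∈ Ipos then (1 : ℂ) else -1) • x i)
    -- the operators `S₊`, `S₋` and the `J`-fusion frame operator `S`:
    (Splus Sminus S : 𝕂 →L[ℂ] 𝕂)
    (hSplus : ∀ f : 𝕂,
      HasSum (fun i : Ipos => ((v (i : ι) : ℂ) ^ 2) • pr (W (i : ι)) (J f)) (Splus f))
    (hSminus : ∀ f : 𝕂,
      HasSum (fun i : Ineg => ((v (i : ι) : ℂ) ^ 2) • pr (W (i : ι)) (J f)) (Sminus f))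
    (hS : ∀ f : 𝕂,
      HasSum (fun i : ι =>
        ((if i ∈ Ipos then (1 : ℂ) else -1) * (v i : ℂ) ^ 2) • pr (W i) (J f)) (S f)) :
    -- `[S₊ f, f] = Σ_{i∈I₊} v_i² ‖π_{W_i}(Jf)‖²` and similarly for `S₋`:
    (∀ f : 𝕂, ip J (Splus f) f =
      ((∑' i : Ipos, v (i : ι) ^ 2 * ‖pr (W (i : ι)) (J f)‖ ^ 2 : ℝ) : ℂ)) ∧
    (∀ f : 𝕂, ip J (Sminus f) f =
      ((∑' i : Ineg, v (i : ι) ^ 2 * ‖pr (W (i : ι)) (J f)‖ ^ 2 : ℝ) : ℂ)) ∧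
    -- `S₊` and `S₋` are `J`-positive:
    (∀ f : 𝕂, 0 ≤ (ip J (Splus f) f).re) ∧ (∀ f : 𝕂, 0 ≤ (ip J (Sminus f) f).re) ∧
    -- `S₊ = T₊ T₊^#` and `S₋ = - T₋ T₋^#`:
    Splus = (T ∘L Ppos) ∘L
      (J2 ∘L ContinuousLinearMap.adjoint (T ∘L Ppos) ∘L J) ∧
    Sminus = -((T ∘L Pneg) ∘L
      (J2 ∘L ContinuousLinearMap.adjoint (T ∘L Pneg) ∘L J)) ∧
    -- `S = T T^#` and `S = S₊ - S₋`:
    S = T ∘L (J2 ∘L ContinuousLinearMap.adjoint T ∘L J) ∧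
    S = Splus - Sminus := by
  classical
  have hpr : ∀ (i : ι) (g : 𝕂), pr (W i) g = ((W i).orthogonalProjectionOnto g : 𝕂) :=
    fun i g => pr_apply' (W i) (hWc i) g
  have hT : ∀ x : lp (fun i => W i) 2, HasSum (fun i => (v i : ℂ) • (x i : 𝕂)) (T x) := hF.synth
  -- σ notation
  set σ : ι → ℂ := fun i => if i ∈ Ipos then (1 : ℂ) else -1 with hσ
  have hnegpos : ∀ i ∈ Ineg, i ∉ Ipos := by
    intro i hi
    rcases hF.partition i with ⟨h1, h2⟩ | ⟨h1, h2⟩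
    · exact absurd hi h2
    · exact h2
  -- synthesis property of T ∘ Ppos and T ∘ Pneg
  have hTpos : ∀ x : lp (fun i => W i) 2,
      HasSum (fun i => (if i ∈ Ipos then (v i : ℂ) else 0) • (x i : 𝕂)) ((T ∘L Ppos) x) := by
    intro x
    have key : (fun i => (v i : ℂ) • ((Ppos x) i : 𝕂))
        = fun i => (if i ∈ Ipos then (v i : ℂ) else 0) • (x i : 𝕂) := by
      funext i
      rw [hPpos x i]
      by_cases h : i ∈ Ipos <;> simp [h]
    have := hT (Ppos x)
    rw [key] at this
    exact this
  have hTneg : ∀ x : lp (fun i => W i) 2,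
      HasSum (fun i => (if i ∈ Ineg then (v i : ℂ) else 0) • (x i : 𝕂)) ((T ∘L Pneg) x) := by
    intro x
    have key : (fun i => (v i : ℂ) • ((Pneg x) i : 𝕂))
        = fun i => (if i ∈ Ineg then (v i : ℂ) else 0) • (x i : 𝕂) := by
      funext i
      rw [hPneg x i]
      by_cases h : i ∈ Ineg <;> simp [h]
    have := hT (Pneg x)
    rw [key] at this
    exact this
  -- the inner product identities
  have key : ∀ f : 𝕂, HasSum
      (fun i : Ipos => ((v (i : ι) ^ 2 * ‖pr (W (i : ι)) (J f)‖ ^ 2 : ℝ) : ℂ))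
      (ip J (Splus f) f) := by
    intro f
    have h1 := (hSplus f).mapL (innerSL ℂ (J f))
    have key2 : (fun i : Ipos => innerSL ℂ (J f) (((v (i : ι) : ℂ) ^ 2) • pr (W (i : ι)) (J f)))
        = fun i : Ipos => ((v (i : ι) ^ 2 * ‖pr (W (i : ι)) (J f)‖ ^ 2 : ℝ) : ℂ) := by
      funext i
      simp only [innerSL_apply_apply, inner_smul_right]
      rw [inner_pr_self (W (i : ι)) (hWc (i : ι)) (J f)]
      push_cast
      ring
    rw [key2] at h1
    exact h1
  have keym : ∀ f : 𝕂, HasSum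
      (fun i : Ineg => ((v (i : ι) ^ 2 * ‖pr (W (i : ι)) (J f)‖ ^ 2 : ℝ) : ℂ))
      (ip J (Sminus f) f) := by
    intro f
    have h1 := (hSminus f).mapL (innerSL ℂ (J f))
    have key2 : (fun i : Ineg => innerSL ℂ (J f) (((v (i : ι) : ℂ) ^ 2) • pr (W (i : ι)) (J f)))
        = fun i : Ineg => ((v (i : ι) ^ 2 * ‖pr (W (i : ι)) (J f)‖ ^ 2 : ℝ) : ℂ) := by
      funext i
      simp only [innerSL_apply_apply, inner_smul_right]
      rw [inner_pr_self (W (i : ι)) (hWc (i : ι)) (J f)]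
      push_cast
      ring
    rw [key2] at h1
    exact h1
  have ipP : ∀ f : 𝕂, ip J (Splus f) f
      = ((∑' i : Ipos, v (i : ι) ^ 2 * ‖pr (W (i : ι)) (J f)‖ ^ 2 : ℝ) : ℂ) := by
    intro f
    have hz := key f
    have hre : HasSum (fun i : Ipos => v (i : ι) ^ 2 * ‖pr (W (i : ι)) (J f)‖ ^ 2)
        (ip J (Splus f) f).re := by
      simpa only [Complex.reCLM_apply, Complex.ofReal_re] using hz.mapL Complex.reCLM
    have him : (ip J (Splus f) f).im = 0 := by
      have h4 := hz.mapL Complex.imCLM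
      simp only [Complex.imCLM_apply, Complex.ofReal_im] at h4
      exact h4.unique hasSum_zero
    rw [hre.tsum_eq]
    exact Complex.ext (by simp) (by simp [him])
  have ipM : ∀ f : 𝕂, ip J (Sminus f) f
      = ((∑' i : Ineg, v (i : ι) ^ 2 * ‖pr (W (i : ι)) (J f)‖ ^ 2 : ℝ) : ℂ) := by
    intro f
    have hz := keym f
    have hre : HasSum (fun i : Ineg => v (i : ι) ^ 2 * ‖pr (W (i : ι)) (J f)‖ ^ 2)
        (ip J (Sminus f) f).re := by
      simpa only [Complex.reCLM_apply, Complex.ofReal_re] using hz.mapL Complex.reCLM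
    have him : (ip J (Sminus f) f).im = 0 := by
      have h4 := hz.mapL Complex.imCLM
      simp only [Complex.imCLM_apply, Complex.ofReal_im] at h4
      exact h4.unique hasSum_zero
    rw [hre.tsum_eq]
    exact Complex.ext (by simp) (by simp [him])
  refine ⟨ipP, ipM, ?_, ?_, ?_, ?_, ?_, ?_⟩
  · intro f
    rw [ipP f]
    simp only [Complex.ofReal_re]
    exact tsum_nonneg fun i => mul_nonneg (sq_nonneg _) (sq_nonneg _)
  · intro f
    rw [ipM f]
    simp only [Complex.ofReal_re]
    exact tsum_nonneg fun i => mul_nonneg (sq_nonneg _) (sq_nonneg _)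
  · -- Splus = T₊ T₊^#
    ext f
    have hadj := adjoint_comp W (fun i => if i ∈ Ipos then (v i : ℂ) else 0) (T ∘L Ppos) hTpos (J f)
    set y := J2 ((ContinuousLinearMap.adjoint (T ∘L Ppos)) (J f)) with hy
    have hyc : ∀ i, ((y i : 𝕂))
        = (if i ∈ Ipos then (v i : ℂ) else 0) • pr (W i) (J f) := by
      intro i
      rw [hy, hJ2, hadj i]
      by_cases h : i ∈ Ipos <;>
        simp [h, hpr, Complex.conj_ofReal, smul_smul]
    have hsum := hTpos y
    have keyf : (fun i => (if i ∈ Ipos then (v i : ℂ) else 0) • ((y i : 𝕂)))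
        = Set.indicator Ipos (fun i => ((v i : ℂ) ^ 2) • pr (W i) (J f)) := by
      funext i
      rw [hyc i]
      by_cases h : i ∈ Ipos
      · rw [if_pos h, Set.indicator_of_mem h, smul_smul, sq]
      · rw [if_neg h, Set.indicator_of_notMem h, zero_smul]
    rw [keyf] at hsum
    have hind := (hasSum_subtype_iff_indicator (s := Ipos)
      (f := fun i => ((v i : ℂ) ^ 2) • pr (W i) (J f))).mp (hSplus f)
    have h5 := hsum.unique hind
    simp only [ContinuousLinearMap.comp_apply] at h5 ⊢
    rw [← hy]
    exact h5.symm
  · -- Sminus = -(T₋ T₋^#)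
    ext f
    have hadj := adjoint_comp W (fun i => if i ∈ Ineg then (v i : ℂ) else 0) (T ∘L Pneg) hTneg (J f)
    set y := J2 ((ContinuousLinearMap.adjoint (T ∘L Pneg)) (J f)) with hy
    have hsum := hTneg y
    have keyf : (fun i => (if i ∈ Ineg then (v i : ℂ) else 0) • ((y i : 𝕂)))
        = fun i => -(Set.indicator Ineg (fun i => ((v i : ℂ) ^ 2) • pr (W i) (J f)) i) := by
      funext i
      rw [hy, hJ2, hadj i]
      by_cases h : i ∈ Ineg
      · have h2 : i ∉ Ipos := hnegpos i h
        rw [if_pos h, Set.indicator_of_mem h, if_neg h2]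
        simp only [Submodule.coe_smul, Complex.conj_ofReal, hpr, smul_smul]
        rw [← neg_smul]
        congr 1
        ring
      · rw [if_neg h, Set.indicator_of_notMem h, zero_smul, neg_zero]
    rw [keyf] at hsum
    have hind := ((hasSum_subtype_iff_indicator (s := Ineg)
      (f := fun i => ((v i : ℂ) ^ 2) • pr (W i) (J f))).mp (hSminus f)).neg
    have h5 := hsum.unique hind
    simp only [ContinuousLinearMap.neg_apply, ContinuousLinearMap.comp_apply] at h5 ⊢
    rw [← hy, h5, neg_neg]
  · -- S = T T^#
    ext f
    have hadj := adjoint_comp W (fun i => (v i : ℂ)) T hT (J f)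
    set y := J2 ((ContinuousLinearMap.adjoint T) (J f)) with hy
    have hsum := hT y
    have keyf : (fun i => (v i : ℂ) • ((y i : 𝕂)))
        = fun i => (σ i * (v i : ℂ) ^ 2) • pr (W i) (J f) := by
      funext i
      rw [hy, hJ2, hadj i]
      simp only [Submodule.coe_smul, Complex.conj_ofReal, hpr, smul_smul, hσ]
      congr 1
      ring
    rw [keyf] at hsum
    have h5 := (hS f).unique hsum
    simp only [ContinuousLinearMap.comp_apply] at h5 ⊢
    rw [← hy]
    exact h5
  · -- S = Splus - Sminus
    ext f
    have h1 := (hasSum_subtype_iff_indicator (s := Ipos)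
      (f := fun i => ((v i : ℂ) ^ 2) • pr (W i) (J f))).mp (hSplus f)
    have h2 := (hasSum_subtype_iff_indicator (s := Ineg)
      (f := fun i => ((v i : ℂ) ^ 2) • pr (W i) (J f))).mp (hSminus f)
    have h3 := h1.sub h2
    have keyf : (fun i => Set.indicator Ipos (fun i => ((v i : ℂ) ^ 2) • pr (W i) (J f)) i
          - Set.indicator Ineg (fun i => ((v i : ℂ) ^ 2) • pr (W i) (J f)) i)
        = fun i => ((if i ∈ Ipos then (1 : ℂ) else -1) * (v i : ℂ) ^ 2) • pr (W i) (J f) := by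
      funext i
      rcases hF.partition i with ⟨hp, hn⟩ | ⟨hn, hp⟩
      · simp [Set.indicator_apply, hp, hn]
      · simp [Set.indicator_apply, hp, hn, neg_smul]
    rw [keyf] at h3
    have h5 := (hS f).unique h3
    simp only [ContinuousLinearMap.sub_apply]
    exact h5

end JFF
end
end

section
/- Let 𝕂 be a Krein space with fundamental symmetry J and let {(W_i, v_i) : i ∈ I} be a J-fusion frame for 𝕂 with positive synthesis part T₊ and M₊ = closure of Σ_{i∈I₊} W_i. Then for every f ∈ M₊, Σ_{i∈I₊} v_i² [π_{W_i}(Jf), f] ≤ (1/γ(G_{M₊})) ‖T₊‖² [f,f], where γ denotes the reduced minimum modulus and G_{M₊} the Gramian of M₊. -/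
noncomputable section

open scoped InnerProductSpace ENNReal

attribute [local instance] Classical.propDecidable

namespace JFF

variable {𝕂 : Type*} [NormedAddCommGroup 𝕂] [InnerProductSpace ℂ 𝕂] [CompleteSpace 𝕂]
variable {ι : Type*}

section Aux

local notation "⟪" x ", " y "⟫" => @inner ℂ _ _ x y

variable {H : Type*} [NormedAddCommGroup H] [InnerProductSpace ℂ H] [CompleteSpace H]

lemma gram_ineq (G : H →L[ℂ] H)
    (hsym : ∀ x y : H, ⟪G x, y⟫ = ⟪x, G y⟫)
    {α : ℝ} (hα : 0 < α)
    (hbd : ∀ z : H, α * ‖z‖ ^ 2 ≤ (⟪G z, z⟫).re)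
    {x : H} (hx : x ≠ 0) :
    α ≤ rmm G ∧ rmm G * ‖x‖ ^ 2 ≤ (⟪G x, x⟫).re := by
  have hker : ∀ y : H, G y = 0 → y = 0 := by
    intro y hy
    have h1 := hbd y
    rw [hy] at h1
    simp only [inner_zero_left, Complex.zero_re] at h1
    have h2 : ‖y‖ = 0 := by
      by_contra h
      have h3 : 0 < ‖y‖ := lt_of_le_of_ne (norm_nonneg y) (Ne.symm h)
      nlinarith [mul_pos hα (pow_pos h3 2)]
    exact norm_eq_zero.mp h2
  have hlow : ∀ y : H, α * ‖y‖ ≤ ‖G y‖ := by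
    intro y
    rcases eq_or_ne y 0 with rfl | hy
    · simp
    · have h1 := hbd y
      have h2 : (⟪G y, y⟫).re ≤ ‖G y‖ * ‖y‖ := re_inner_le_norm (𝕜 := ℂ) (G y) y
      have h3 : 0 < ‖y‖ := norm_pos_iff.mpr hy
      nlinarith
  have hkerbot : LinearMap.ker (G : H →ₗ[ℂ] H) = ⊥ := by
    rw [Submodule.eq_bot_iff]
    intro y hy
    exact hker y (LinearMap.mem_ker.mp hy)
  have hmem : ∀ z : H, z ∈ (LinearMap.ker (G : H →ₗ[ℂ] H))ᗮ := by
    intro z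
    rw [hkerbot, Submodule.bot_orthogonal_eq_top]
    trivial
  have hxn : 0 < ‖x‖ := norm_pos_iff.mpr hx
  have hunit : ∀ y : H, y ≠ 0 → ‖(((‖y‖⁻¹ : ℝ) : ℂ) • y)‖ = 1 := by
    intro y hy
    have h3 : 0 < ‖y‖ := norm_pos_iff.mpr hy
    rw [norm_smul, Complex.norm_real, Real.norm_eq_abs,
      abs_of_nonneg (inv_nonneg.mpr (norm_nonneg y))]
    exact inv_mul_cancel₀ h3.ne'
  have hγle : ∀ z : H, ‖z‖ = 1 → rmm G ≤ ‖G z‖ := by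
    intro z hz
    exact csInf_le ⟨0, by rintro b ⟨w, _, rfl⟩; exact norm_nonneg _⟩
      ⟨z, ⟨hmem z, hz⟩, rfl⟩
  have hγα : α ≤ rmm G := by
    refine le_csInf ⟨‖G (((‖x‖⁻¹ : ℝ) : ℂ) • x)‖,
      ⟨_, ⟨hmem _, hunit x hx⟩, rfl⟩⟩ ?_
    rintro b ⟨z, ⟨_, hz⟩, rfl⟩
    have := hlow z
    rw [hz] at this
    simpa using this
  have hγpos : 0 < rmm G := lt_of_lt_of_le hα hγα
  refine ⟨hγα, ?_⟩
  -- `G` is surjective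
  have hanti : AntilipschitzWith (α⁻¹).toNNReal G := by
    apply ContinuousLinearMap.antilipschitz_of_bound G
    intro z
    have h1 := hlow z
    have h2 : ((α⁻¹).toNNReal : ℝ) = α⁻¹ := Real.coe_toNNReal _ (inv_nonneg.mpr hα.le)
    rw [h2]
    have : ‖z‖ = α⁻¹ * (α * ‖z‖) := by field_simp
    rw [this]
    exact mul_le_mul_of_nonneg_left h1 (inv_nonneg.mpr hα.le)
  have hclosedrange : IsClosed ((LinearMap.range (G : H →ₗ[ℂ] H) : Submodule ℂ H) : Set H) := by
    have : ((LinearMap.range (G : H →ₗ[ℂ] H) : Submodule ℂ H) : Set H) = Set.range G := by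
      ext z; simp [LinearMap.mem_range]
    rw [this]
    exact hanti.isClosed_range G.uniformContinuous
  have hdense : ((LinearMap.range (G : H →ₗ[ℂ] H) : Submodule ℂ H))ᗮ = ⊥ := by
    rw [Submodule.eq_bot_iff]
    intro y hy
    have h1 : ⟪G y, y⟫ = 0 := (Submodule.mem_orthogonal _ _).mp hy (G y) ⟨y, rfl⟩
    have h2 := hbd y
    rw [h1] at h2
    simp only [Complex.zero_re] at h2
    have : ‖y‖ = 0 := by
      by_contra h
      have h3 : 0 < ‖y‖ := lt_of_le_of_ne (norm_nonneg y) (Ne.symm h)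
      nlinarith [mul_pos hα (pow_pos h3 2)]
    exact norm_eq_zero.mp this
  have hrange : LinearMap.range (G : H →ₗ[ℂ] H) = ⊤ := by
    have h1 := Submodule.topologicalClosure_eq_top_iff.mpr hdense
    rwa [IsClosed.submodule_topologicalClosure_eq hclosedrange] at h1
  obtain ⟨y, hy⟩ : ∃ y, G y = x := by
    have : x ∈ LinearMap.range (G : H →ₗ[ℂ] H) := hrange ▸ Submodule.mem_top
    exact this
  have hyne : y ≠ 0 := by rintro rfl; simp at hy; exact hx hy.symm
  have hyn : 0 < ‖y‖ := norm_pos_iff.mpr hyne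
  -- Cauchy–Schwarz for the positive form
  set a := (⟪G y, y⟫).re with ha
  set c := (⟪G x, x⟫).re with hc
  have key : ∀ t : ℝ, 0 ≤ a * (t * t) + (-(2 * ‖x‖ ^ 2)) * t + c := by
    intro t
    have h0 : 0 ≤ (⟪G (x - (t : ℂ) • y), x - (t : ℂ) • y⟫).re :=
      le_trans (by positivity) (hbd _)
    have hexp : ⟪G (x - (t : ℂ) • y), x - (t : ℂ) • y⟫
        = ⟪G x, x⟫ - (t : ℂ) * ⟪G x, y⟫ - (t : ℂ) * ⟪G y, x⟫
          + (t : ℂ) ^ 2 * ⟪G y, y⟫ := by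
      simp only [map_sub, map_smul, inner_sub_left, inner_sub_right,
        inner_smul_left, inner_smul_right, Complex.conj_ofReal]
      ring
    have hre1 : (⟪G x, y⟫).re = ‖x‖ ^ 2 := by
      rw [hsym x y, hy]
      exact inner_self_eq_norm_sq (𝕜 := ℂ) x
    have hre2 : (⟪G y, x⟫).re = ‖x‖ ^ 2 := by
      rw [hy]
      exact inner_self_eq_norm_sq (𝕜 := ℂ) x
    have hsq : ((t : ℂ) ^ 2 * ⟪G y, y⟫).re = t ^ 2 * a := by
      rw [show ((t : ℂ) ^ 2) = ((t ^ 2 : ℝ) : ℂ) by push_cast; ring,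
        Complex.re_ofReal_mul]
    have h1 : ((t : ℂ) * ⟪G x, y⟫).re = t * (⟪G x, y⟫).re := Complex.re_ofReal_mul _ _
    have h2 : ((t : ℂ) * ⟪G y, x⟫).re = t * (⟪G y, x⟫).re := Complex.re_ofReal_mul _ _
    have h0' : 0 ≤ c - t * (⟪G x, y⟫).re - t * (⟪G y, x⟫).re + t ^ 2 * a := by
      calc (0:ℝ) ≤ (⟪G (x - (t : ℂ) • y), x - (t : ℂ) • y⟫).re := h0
        _ = (⟪G x, x⟫ - (t : ℂ) * ⟪G x, y⟫ - (t : ℂ) * ⟪G y, x⟫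
            + (t : ℂ) ^ 2 * ⟪G y, y⟫).re := by rw [hexp]
        _ = c - t * (⟪G x, y⟫).re - t * (⟪G y, x⟫).re + t ^ 2 * a := by
            simp only [Complex.add_re, Complex.sub_re, h1, h2, hsq, hc]
    rw [hre1, hre2] at h0'
    nlinarith [h0']
  have hdisc : discrim a (-(2 * ‖x‖ ^ 2)) c ≤ 0 := discrim_le_zero key
  rw [discrim] at hdisc
  have hq : ‖x‖ ^ 4 ≤ a * c := by nlinarith [hdisc]
  have haup : a ≤ ‖x‖ ^ 2 / rmm G := by
    have h1 : a ≤ ‖G y‖ * ‖y‖ := re_inner_le_norm (𝕜 := ℂ) (G y) y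
    have h2 : rmm G * ‖y‖ ≤ ‖G y‖ := by
      have h3 := hγle (((‖y‖⁻¹ : ℝ) : ℂ) • y) (hunit y hyne)
      rw [map_smul, norm_smul] at h3
      have h4 : ‖(((‖y‖⁻¹ : ℝ) : ℂ))‖ = ‖y‖⁻¹ := by
        simp [abs_of_nonneg (inv_nonneg.mpr (norm_nonneg y))]
      rw [h4] at h3
      calc rmm G * ‖y‖ ≤ (‖y‖⁻¹ * ‖G y‖) * ‖y‖ :=
            mul_le_mul_of_nonneg_right h3 (norm_nonneg y)
        _ = ‖G y‖ := by field_simp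
    rw [hy] at h2
    have h5 : ‖y‖ ≤ ‖x‖ / rmm G := by
      rw [le_div_iff₀ hγpos]; linarith [h2]
    calc a ≤ ‖G y‖ * ‖y‖ := h1
      _ = ‖x‖ * ‖y‖ := by rw [hy]
      _ ≤ ‖x‖ * (‖x‖ / rmm G) := mul_le_mul_of_nonneg_left h5 (norm_nonneg x)
      _ = ‖x‖ ^ 2 / rmm G := by ring
  have hcpos : 0 < c := lt_of_lt_of_le (by positivity) (hbd x)
  have : ‖x‖ ^ 4 ≤ (‖x‖ ^ 2 / rmm G) * c := by
    calc ‖x‖ ^ 4 ≤ a * c := hq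
      _ ≤ (‖x‖ ^ 2 / rmm G) * c := mul_le_mul_of_nonneg_right haup hcpos.le
  have h6 : rmm G * ‖x‖ ^ 4 ≤ ‖x‖ ^ 2 * c := by
    have := mul_le_mul_of_nonneg_left this hγpos.le
    calc rmm G * ‖x‖ ^ 4 ≤ rmm G * ((‖x‖ ^ 2 / rmm G) * c) := this
      _ = ‖x‖ ^ 2 * c := by field_simp
  nlinarith [h6, sq_nonneg ‖x‖, hxn]

end Aux

section Aux2

local notation "⟪" x ", " y "⟫" => @inner ℂ _ _ x y

variable {𝕂 : Type*} [NormedAddCommGroup 𝕂] [InnerProductSpace ℂ 𝕂] [CompleteSpace 𝕂]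

lemma pr_mem {M : Submodule ℂ 𝕂} (hM : IsClosed (M : Set 𝕂)) (x : 𝕂) : pr M x ∈ M := by
  unfold pr
  rw [dif_pos hM]
  letI : CompleteSpace M := hM.completeSpace_coe
  exact (M.orthogonalProjectionOnto x).2

lemma pr_inner_eq_zero {M : Submodule ℂ 𝕂} (hM : IsClosed (M : Set 𝕂)) (x w : 𝕂)
    (hw : w ∈ M) : ⟪x - pr M x, w⟫ = 0 := by
  unfold pr
  rw [dif_pos hM]
  letI : CompleteSpace M := hM.completeSpace_coe
  exact M.starProjection_inner_eq_zero x w hw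

lemma inner_pr {M : Submodule ℂ 𝕂} (hM : IsClosed (M : Set 𝕂)) (x w : 𝕂)
    (hw : w ∈ M) : ⟪x, w⟫ = ⟪pr M x, w⟫ := by
  have h := pr_inner_eq_zero hM x w hw
  rw [inner_sub_left] at h
  linear_combination h

lemma gram_inner_eq (J : 𝕂 →L[ℂ] 𝕂) {M : Submodule ℂ 𝕂} (hM : IsClosed (M : Set 𝕂))
    (x y : M) : ⟪gram J M x, y⟫ = ⟪J (x : 𝕂), (y : 𝕂)⟫ := by
  unfold gram
  rw [dif_pos hM]
  letI : CompleteSpace M := hM.completeSpace_coe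
  rw [Submodule.coe_inner]
  have h := M.starProjection_inner_eq_zero (J (x : 𝕂)) (y : 𝕂) y.2
  rw [inner_sub_left, Submodule.starProjection_apply] at h
  simp only [ContinuousLinearMap.comp_apply, Submodule.subtypeL_apply]
  linear_combination -h

end Aux2

/-- For a `J`-fusion frame with positive synthesis part `T₊` and
`M₊ = cl(Σ_{i∈I₊} W i)`, one has for every `f ∈ M₊`:
`Σ_{i∈I₊} v_i² [π_{W_i}(Jf), f] ≤ (1/γ(G_{M₊})) ‖T₊‖² [f,f]`. -/
theorem stmt8 {𝕂 : Type*} [NormedAddCommGroup 𝕂] [InnerProductSpace ℂ 𝕂] [CompleteSpace 𝕂]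
    {ι : Type*} (J : 𝕂 →L[ℂ] 𝕂) (hJ : IsFundSym J)
    (W : ι → Submodule ℂ 𝕂) (hWc : ∀ i, IsClosed ((W i : Set 𝕂)))
    (v : ι → ℝ) (Ipos Ineg : Set ι)
    (T : lp (fun i => W i) 2 →L[ℂ] 𝕂)
    (hF : IsJFusionFrame J W v Ipos Ineg T)
    -- the positive part `T₊ = T ∘ P₊` of the synthesis operator:
    (Tp : lp (fun i => W i) 2 →L[ℂ] 𝕂)
    (hTp : ∀ x, HasSum (fun i : ι => (if i ∈ Ipos then (v i : ℂ) else 0) • (x i : 𝕂)) (Tp x)) :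
    ∀ f ∈ Mspace W Ipos,
      ∑' i : Ipos, v (i : ι) ^ 2 * (ip J (pr (W (i : ι)) (J f)) f).re
        ≤ (1 / rmm (gram J (Mspace W Ipos))) * ‖Tp‖ ^ 2 * (ip J f f).re := by
  classical
  intro f hf
  set M := Mspace W Ipos with hM
  have hMclosed : IsClosed (M : Set 𝕂) := Submodule.isClosed_topologicalClosure _
  haveI : CompleteSpace M := hMclosed.completeSpace_coe
  -- basic facts about J
  have hJsym : ∀ a b : 𝕂, @inner ℂ _ _ (J a) b = @inner ℂ _ _ a (J b) := fun a b =>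
    (ContinuousLinearMap.isSelfAdjoint_iff_isSymmetric.mp hJ.1) a b
  have hJJ : ∀ a : 𝕂, J (J a) = a := by
    intro a
    have h := congrArg (fun (S : 𝕂 →L[ℂ] 𝕂) => S a) hJ.2
    simpa using h
  have hJnorm : ∀ a : 𝕂, ‖J a‖ = ‖a‖ := by
    intro a
    have h1 : @inner ℂ _ _ (J a) (J a) = @inner ℂ _ _ a a := by
      rw [hJsym a (J a), hJJ]
    have h2 : ‖J a‖ ^ 2 = ‖a‖ ^ 2 := by
      rw [← inner_self_eq_norm_sq (𝕜 := ℂ) (J a), ← inner_self_eq_norm_sq (𝕜 := ℂ) a, h1]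
    have h3 := congrArg Real.sqrt h2
    rwa [Real.sqrt_sq (norm_nonneg _), Real.sqrt_sq (norm_nonneg _)] at h3
  set u := J f with hu
  -- each `W i`, `i ∈ Ipos`, is contained in the range of `T ∘ P₊`
  have hsub : ∀ i ∈ Ipos, W i ≤ rng T Ipos := by
    intro i hi g hg
    have hvne : ((v i : ℂ)) ≠ 0 := by
      exact_mod_cast Complex.ofReal_ne_zero.mpr (hF.weights i).ne'
    set a : W i := ((v i : ℂ))⁻¹ • (⟨g, hg⟩ : W i) with ha
    set x : lp (fun i => ↥(W i)) 2 := lp.single 2 i a with hxdef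
    refine Submodule.mem_map.mpr ⟨x, ?_, (?_ : T x = g)⟩
    · intro j hj
      have hij : j ≠ i := fun h => hj (by rw [h]; exact hi)
      rw [hxdef]
      exact lp.single_apply_ne (E := fun i => ↥(W i)) 2 i a hij
    · have hS := hF.synth x
      have hzero : ∀ j, j ≠ i →
          (v j : ℂ) • ((x j : ↥(W j)) : 𝕂) = 0 := by
        intro j hj
        rw [hxdef, lp.single_apply_ne (E := fun i => ↥(W i)) 2 i a hj]
        simp
      have hval : HasSum (fun j => (v j : ℂ) • ((x j : ↥(W j)) : 𝕂))
          ((v i : ℂ) • ((x i : ↥(W i)) : 𝕂)) := hasSum_single i hzero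
      have hxi : x i = a := by rw [hxdef]; exact lp.single_apply_self (E := fun i => ↥(W i)) 2 i a
      have := hS.unique hval
      rw [this, hxi]
      rw [ha]
      simp only [Submodule.coe_smul]
      rw [smul_smul, mul_inv_cancel₀ hvne, one_smul]
  have hsup : (⨆ i ∈ Ipos, W i) ≤ rng T Ipos := iSup₂_le hsub
  -- uniform positivity on M
  obtain ⟨α, hα, hαineq⟩ := hF.max_pos.1
  have hMle : M ≤ (rng T Ipos).topologicalClosure :=
    Submodule.topologicalClosure_mono hsup
  have hMpos : ∀ g ∈ M, α * ‖g‖ ^ 2 ≤ (ip J g g).re := by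
    intro g hg
    have hgmem : g ∈ closure ((rng T Ipos : Submodule ℂ 𝕂) : Set 𝕂) := hMle hg
    have hC : IsClosed {z : 𝕂 | α * ‖z‖ ^ 2 ≤ (ip J z z).re} := by
      apply isClosed_le
      · exact (continuous_const.mul ((continuous_norm).pow 2))
      · exact Complex.continuous_re.comp ((J.continuous).inner continuous_id)
    exact closure_minimal (fun z hz => hαineq z hz) hC hgmem
  -- the Gramian is a positive symmetric operator on M
  have hGsym : ∀ x y : M, @inner ℂ _ _ (gram J M x) y = @inner ℂ _ _ x (gram J M y) := by
    intro x y
    calc @inner ℂ _ _ (gram J M x) y = @inner ℂ _ _ (J (x : 𝕂)) (y : 𝕂) :=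
          gram_inner_eq J hMclosed x y
      _ = @inner ℂ _ _ (x : 𝕂) (J (y : 𝕂)) := hJsym _ _
      _ = (starRingEnd ℂ) (@inner ℂ _ _ (J (y : 𝕂)) (x : 𝕂)) := (inner_conj_symm _ _).symm
      _ = (starRingEnd ℂ) (@inner ℂ _ _ (gram J M y) x) := by rw [gram_inner_eq J hMclosed y x]
      _ = @inner ℂ _ _ x (gram J M y) := inner_conj_symm _ _
  have hGbd : ∀ x : M, α * ‖x‖ ^ 2 ≤ (@inner ℂ _ _ (gram J M x) x).re := by
    intro x
    rw [gram_inner_eq J hMclosed x x]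
    exact hMpos (x : 𝕂) x.2
  -- orthogonal projections onto the `W i`
  set b : ι → 𝕂 := fun i => pr (W i) u with hb
  have hbmem : ∀ i, b i ∈ W i := fun i => pr_mem (hWc i) u
  have hbinner : ∀ i, @inner ℂ _ _ u (b i) = @inner ℂ _ _ (b i) (b i) :=
    fun i => inner_pr (hWc i) u (b i) (hbmem i)
  have hterm : ∀ i : ι, (ip J (pr (W i) u) f).re = ‖b i‖ ^ 2 := by
    intro i
    show (@inner ℂ _ _ u (b i)).re = ‖b i‖ ^ 2
    rw [hbinner i]
    exact inner_self_eq_norm_sq (𝕜 := ℂ) (b i)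
  -- finite-sum bound via the synthesis operator
  have hfin : ∀ s : Finset ι, (↑s ⊆ Ipos) →
      ∑ i ∈ s, v i ^ 2 * ‖b i‖ ^ 2 ≤ ‖Tp‖ ^ 2 * ‖f‖ ^ 2 := by
    intro s hs
    set aa : ∀ i, W i := fun i => (v i : ℂ) • (⟨b i, hbmem i⟩ : W i) with haa
    set xs : lp (fun i => W i) 2 := ∑ i ∈ s, lp.single 2 i (aa i) with hxs
    have hcoord : ∀ j, ((xs j : W j) : 𝕂) = if j ∈ s then (v j : ℂ) • b j else 0 := by
      intro j
      have h1 : xs j = ∑ i ∈ s, (lp.single 2 i (aa i)) j := by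
        rw [hxs, lp.coeFn_sum, Finset.sum_apply]
      rw [h1]
      simp only [lp.single_apply, Finset.sum_pi_single]
      by_cases hj : j ∈ s
      · rw [if_pos hj, if_pos hj, haa]
        simp
      · rw [if_neg hj, if_neg hj]
        simp
    have hTps : Tp xs = ∑ i ∈ s, ((v i : ℂ) * (v i : ℂ)) • b i := by
      have h1 := hTp xs
      have h2 : HasSum (fun i => (if i ∈ Ipos then (v i : ℂ) else 0) • ((xs i : W i) : 𝕂))
          (∑ i ∈ s, (if i ∈ Ipos then (v i : ℂ) else 0) • ((xs i : W i) : 𝕂)) := by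
        apply hasSum_sum_of_ne_finset_zero
        intro j hj
        rw [hcoord j, if_neg hj, smul_zero]
      rw [h1.unique h2]
      refine Finset.sum_congr rfl (fun j hjs => ?_)
      rw [hcoord j, if_pos hjs, if_pos (hs hjs), smul_smul]
    have hinner : (@inner ℂ _ _ u (Tp xs)).re = ∑ i ∈ s, v i ^ 2 * ‖b i‖ ^ 2 := by
      rw [hTps, inner_sum]
      rw [Complex.re_sum]
      refine Finset.sum_congr rfl (fun j hjs => ?_)
      rw [inner_smul_right]
      have h3 : ((v j : ℂ) * (v j : ℂ)) = (((v j ^ 2 : ℝ)) : ℂ) := by push_cast; ring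
      rw [h3, Complex.re_ofReal_mul, hbinner j]
      congr 1
      exact inner_self_eq_norm_sq (𝕜 := ℂ) (b j)
    have hnaa : ∀ i, ‖aa i‖ = v i * ‖b i‖ := by
      intro i
      rw [haa]
      simp only [norm_smul, Complex.norm_real, Real.norm_eq_abs,
        abs_of_pos (hF.weights i)]
      rfl
    have hnorm : ‖xs‖ ^ 2 = ∑ i ∈ s, v i ^ 2 * ‖b i‖ ^ 2 := by
      have h4 := lp.norm_sum_single (p := 2) (by norm_num) aa s
      rw [show ((2 : ℝ≥0∞).toReal) = (2 : ℝ) by simp] at h4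
      rw [Real.rpow_two] at h4
      rw [← hxs] at h4
      rw [h4]
      refine Finset.sum_congr rfl (fun j _ => ?_)
      rw [Real.rpow_two, hnaa j]
      ring
    have hS0 : (0:ℝ) ≤ ∑ i ∈ s, v i ^ 2 * ‖b i‖ ^ 2 :=
      Finset.sum_nonneg (fun i _ => by positivity)
    have hchain : ∑ i ∈ s, v i ^ 2 * ‖b i‖ ^ 2 ≤ ‖u‖ * (‖Tp‖ * ‖xs‖) := by
      calc ∑ i ∈ s, v i ^ 2 * ‖b i‖ ^ 2 = (@inner ℂ _ _ u (Tp xs)).re := hinner.symm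
        _ ≤ ‖(@inner ℂ _ _ u (Tp xs))‖ := Complex.re_le_norm _
        _ = ‖@inner ℂ _ _ u (Tp xs)‖ := rfl
        _ ≤ ‖u‖ * ‖Tp xs‖ := norm_inner_le_norm _ _
        _ ≤ ‖u‖ * (‖Tp‖ * ‖xs‖) :=
            mul_le_mul_of_nonneg_left (Tp.le_opNorm xs) (norm_nonneg u)
    have huf : ‖u‖ = ‖f‖ := hJnorm f
    rw [huf] at hchain
    nlinarith [norm_nonneg xs, norm_nonneg f, norm_nonneg Tp,
      sq_nonneg (‖xs‖ - ‖Tp‖ * ‖f‖), hnorm]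
  -- summability and bound of the series
  have hnn : ∀ i : Ipos, (0:ℝ) ≤ v (i : ι) ^ 2 * ‖b (i : ι)‖ ^ 2 := fun i => by positivity
  have hfin' : ∀ F : Finset Ipos,
      ∑ i ∈ F, v (i : ι) ^ 2 * ‖b (i : ι)‖ ^ 2 ≤ ‖Tp‖ ^ 2 * ‖f‖ ^ 2 := by
    intro F
    have h1 : ∑ i ∈ F, v (i : ι) ^ 2 * ‖b (i : ι)‖ ^ 2
        = ∑ j ∈ F.map (Function.Embedding.subtype _), v j ^ 2 * ‖b j‖ ^ 2 := by
      rw [Finset.sum_map]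
      rfl
    rw [h1]
    apply hfin
    intro j hj
    rw [Finset.coe_map] at hj
    obtain ⟨i, _, rfl⟩ := hj
    exact i.2
  have hsummable : Summable (fun i : Ipos => v (i : ι) ^ 2 * ‖b (i : ι)‖ ^ 2) :=
    summable_of_sum_le hnn hfin'
  have htsum_le : ∑' i : Ipos, v (i : ι) ^ 2 * ‖b (i : ι)‖ ^ 2 ≤ ‖Tp‖ ^ 2 * ‖f‖ ^ 2 :=
    Summable.tsum_le_of_sum_le hsummable hfin'
  -- the Gramian inequality
  by_cases hf0 : f = 0
  · subst hf0
    simp [ip]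
  · have hx0 : (⟨f, hf⟩ : M) ≠ 0 := by
      intro h
      apply hf0
      exact congrArg Subtype.val h
    obtain ⟨hγα, hγkey⟩ := gram_ineq (gram J M) hGsym hα hGbd hx0
    have hγpos : 0 < rmm (gram J M) := lt_of_lt_of_le hα hγα
    have hmb : rmm (gram J M) * ‖f‖ ^ 2 ≤ (ip J f f).re := by
      have h1 := hγkey
      rw [gram_inner_eq J hMclosed] at h1
      exact h1
    have hfsq : ‖f‖ ^ 2 ≤ (1 / rmm (gram J M)) * (ip J f f).re := by
      rw [one_div]
      calc ‖f‖ ^ 2 = (rmm (gram J M))⁻¹ * (rmm (gram J M) * ‖f‖ ^ 2) := by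
            field_simp
        _ ≤ (rmm (gram J M))⁻¹ * (ip J f f).re :=
            mul_le_mul_of_nonneg_left hmb (inv_nonneg.mpr hγpos.le)
    calc ∑' i : Ipos, v (i : ι) ^ 2 * (ip J (pr (W (i : ι)) (J f)) f).re
        = ∑' i : Ipos, v (i : ι) ^ 2 * ‖b (i : ι)‖ ^ 2 :=
          tsum_congr (fun i => by rw [hterm])
      _ ≤ ‖Tp‖ ^ 2 * ‖f‖ ^ 2 := htsum_le
      _ ≤ ‖Tp‖ ^ 2 * ((1 / rmm (gram J M)) * (ip J f f).re) :=
          mul_le_mul_of_nonneg_left hfsq (by positivity)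
      _ = (1 / rmm (gram J M)) * ‖Tp‖ ^ 2 * (ip J f f).re := by ring

end JFF
end
end

section
/- Let 𝕂 be a complex Hilbert space with a fundamental symmetry J (bounded, self-adjoint, J² = I), let M be a closed subspace of 𝕂 with orthogonal projection π_M, and let T : H₀ → 𝕂 be a bounded linear operator from a Hilbert space H₀. If there exist constants 0 < A ≤ B such that A π_M ≤ π_M J T T^* J π_M ≤ B π_M in the ordering of bounded self-adjoint operators, then the range of π_M J T equals M. -/
noncomputable section

open scoped InnerProductSpace ENNReal

attribute [local instance] Classical.propDecidable

namespace JFF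

variable {𝕂 : Type*} [NormedAddCommGroup 𝕂] [InnerProductSpace ℂ 𝕂] [CompleteSpace 𝕂]
variable {ι : Type*}

theorem aux_surj {𝕂 : Type*}
    [NormedAddCommGroup 𝕂] [InnerProductSpace ℂ 𝕂] [CompleteSpace 𝕂]
    (M : Submodule ℂ 𝕂) (hM : IsClosed ((M : Set 𝕂)))
    (G : M →L[ℂ] M) (A : ℝ) (hA : 0 < A)
    (hG : ∀ f : M, A * ‖f‖ ^ 2 ≤ (@inner ℂ _ _ (G f) f).re) :
    LinearMap.range (G : M →ₗ[ℂ] M) = ⊤ := by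
  haveI : CompleteSpace M := hM.completeSpace_coe
  have hbound : ∀ f : M, ‖f‖ ≤ (⟨A, hA.le⟩ : NNReal)⁻¹ * ‖G f‖ := by
    intro f
    have h1 : A * ‖f‖ ^ 2 ≤ ‖G f‖ * ‖f‖ := by
      calc A * ‖f‖ ^ 2 ≤ (@inner ℂ _ _ (G f) f).re := hG f
      _ ≤ ‖@inner ℂ _ _ (G f) f‖ := Complex.re_le_norm _
      _ ≤ ‖G f‖ * ‖f‖ := norm_inner_le_norm _ _
    have h2 : A * ‖f‖ ≤ ‖G f‖ := by nlinarith [norm_nonneg f, norm_nonneg (G f)]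
    have h3 : ‖f‖ ≤ A⁻¹ * ‖G f‖ := by
      have := (le_div_iff₀' hA).mpr h2
      simpa [div_eq_inv_mul] using this
    simpa [NNReal.coe_inv] using h3
  have hanti := G.antilipschitz_of_bound hbound
  have hclosed : IsClosed (LinearMap.range (G : M →ₗ[ℂ] M) : Set M) := by
    rw [LinearMap.coe_range]
    exact hanti.isClosed_range G.uniformContinuous
  haveI : CompleteSpace (LinearMap.range (G : M →ₗ[ℂ] M)) := hclosed.completeSpace_coe
  have horth : (LinearMap.range (G : M →ₗ[ℂ] M))ᗮ = ⊥ := by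
    rw [Submodule.eq_bot_iff]
    intro g hg
    have h0 : @inner ℂ _ _ (G g) g = 0 :=
      (Submodule.mem_orthogonal _ g).mp hg (G g) (LinearMap.mem_range_self _ g)
    have h4 := hG g
    rw [h0] at h4
    simp only [Complex.zero_re] at h4
    have h5 : ‖g‖ ^ 2 ≤ 0 := by nlinarith
    have h6 : ‖g‖ = 0 := pow_eq_zero_iff (by norm_num) |>.mp (le_antisymm h5 (sq_nonneg _))
    exact norm_eq_zero.mp h6
  have h5 := Submodule.orthogonal_orthogonal (LinearMap.range (G : M →ₗ[ℂ] M))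
  rw [horth, Submodule.bot_orthogonal_eq_top] at h5
  exact h5.symm

/-- (Douglas-type argument.) Let `J` be a fundamental symmetry of the
Hilbert space `𝕂`, `M` a closed subspace, and `T : H₀ → 𝕂` bounded. If there are
`0 < A ≤ B` with `A π_M ≤ π_M J T T^* J π_M ≤ B π_M` (order of bounded selfadjoint
operators), then the range of `π_M J T` equals `M`. -/
theorem stmt11 {𝕂 H₀ : Type*}
    [NormedAddCommGroup 𝕂] [InnerProductSpace ℂ 𝕂] [CompleteSpace 𝕂]
    [NormedAddCommGroup H₀] [InnerProductSpace ℂ H₀] [CompleteSpace H₀]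
    (J : 𝕂 →L[ℂ] 𝕂) (hJ : IsFundSym J)
    (M : Submodule ℂ 𝕂) (hM : IsClosed ((M : Set 𝕂)))
    (T : H₀ →L[ℂ] 𝕂) (A B : ℝ) (hA : 0 < A) (hAB : A ≤ B)
    (h₁ : ∀ f : 𝕂,
      A * (@inner ℂ _ _ (pr M f) f).re ≤
        (@inner ℂ _ _
          ((pr M ∘L J ∘L T ∘L ContinuousLinearMap.adjoint T ∘L J ∘L pr M) f) f).re)
    (h₂ : ∀ f : 𝕂,
      (@inner ℂ _ _
          ((pr M ∘L J ∘L T ∘L ContinuousLinearMap.adjoint T ∘L J ∘L pr M) f) f).re ≤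
        B * (@inner ℂ _ _ (pr M f) f).re) :
    LinearMap.range ((pr M ∘L J ∘L T : H₀ →L[ℂ] 𝕂) : H₀ →ₗ[ℂ] 𝕂) = M := by
  haveI : CompleteSpace M := hM.completeSpace_coe
  have hpr : pr M = M.subtypeL ∘L M.orthogonalProjectionOnto := by
    simp only [pr, dif_pos hM]
  have hprx : ∀ x : 𝕂, pr M x = (M.orthogonalProjectionOnto x : 𝕂) := by
    intro x; rw [hpr]; rfl
  have hmemM : ∀ x : 𝕂, pr M x ∈ M := by
    intro x; rw [hprx]; exact (M.orthogonalProjectionOnto x).2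
  have hfix : ∀ x ∈ M, pr M x = x := by
    intro x hx; rw [hprx]; exact Submodule.starProjection_eq_self_iff.mpr hx
  set C : 𝕂 →L[ℂ] 𝕂 :=
    pr M ∘L J ∘L T ∘L ContinuousLinearMap.adjoint T ∘L J ∘L pr M with hC
  set G : M →L[ℂ] M := M.orthogonalProjectionOnto ∘L (C ∘L M.subtypeL) with hG
  have hGcoe : ∀ f : M, (G f : 𝕂) = C (f : 𝕂) := by
    intro f
    have hCm : C (f : 𝕂) ∈ M := by
      simp only [hC, ContinuousLinearMap.comp_apply]
      exact hmemM _
    simp only [hG, ContinuousLinearMap.comp_apply, Submodule.subtypeL_apply]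
    exact Submodule.starProjection_eq_self_iff.mpr hCm
  have hGpos : ∀ f : M, A * ‖f‖ ^ 2 ≤ (@inner ℂ _ _ (G f) f).re := by
    intro f
    have h := h₁ (f : 𝕂)
    rw [hfix _ f.2] at h
    have hnorm : (@inner ℂ _ _ (f : 𝕂) (f : 𝕂)).re = ‖f‖ ^ 2 := by
      exact inner_self_eq_norm_sq (𝕜 := ℂ) (f : 𝕂)
    rw [hnorm] at h
    have hinner : @inner ℂ _ _ (G f) f = @inner ℂ _ _ (C (f : 𝕂)) (f : 𝕂) := by
      rw [Submodule.coe_inner, hGcoe]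
    rw [hinner]
    exact h
  have hsurj := aux_surj M hM G A hA hGpos
  apply le_antisymm
  · rintro _ ⟨x, rfl⟩
    exact hmemM (J (T x))
  · intro m hm
    have hmem : (⟨m, hm⟩ : M) ∈ LinearMap.range (G : M →ₗ[ℂ] M) := hsurj ▸ Submodule.mem_top
    obtain ⟨f, hf⟩ := hmem
    refine ⟨(ContinuousLinearMap.adjoint T ∘L J ∘L pr M) (f : 𝕂), ?_⟩
    have heq : C (f : 𝕂) =
        (pr M ∘L J ∘L T) ((ContinuousLinearMap.adjoint T ∘L J ∘L pr M) (f : 𝕂)) := by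
      simp only [hC, ContinuousLinearMap.comp_apply]
    rw [ContinuousLinearMap.coe_coe] at hf ⊢
    rw [← heq, ← hGcoe, hf]


end JFF
end
end
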